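/- For any two n×n Hermitian matrices ρ and σ, ‖ρ − σ‖₂² ≥ ‖λ(ρ) − λ(σ)‖₂², where λ(A) denotes the vector of eigenvalues of A arranged in decreasing order and ‖·‖₂ is the Frobenius norm (resp. Euclidean norm on vectors). -/

import Mathlib

open Matrix Finset

lemma monov {n : ℕ} {a b : Fin n → ℝ} (ha : Antitone a) (hb : Antitone b) :
    Monovary a b := fun _ _ h =>
  ha (le_of_not_gt fun hij => absurd (hb hij.le) (not_le.2 h))

lemma ds_sum_le {n : ℕ} (d : Matrix (Fin n) (Fin n) ℝ) (hd : d ∈ doublyStochastic ℝ (Fin n))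
    (a b : Fin n → ℝ) (ha : Antitone a) (hb : Antitone b) :
    ∑ i, ∑ j, d i j * (a i * b j) ≤ ∑ i, a i * b i := by
  obtain ⟨w, hw0, hw1, hwd⟩ := exists_eq_sum_perm_of_mem_doublyStochastic hd
  have key : ∑ i, ∑ j, d i j * (a i * b j)
      = ∑ σ : Equiv.Perm (Fin n), w σ * ∑ i, a i * b (σ i) := by
    rw [← hwd]
    have e1 : ∀ i, ∑ j, (∑ σ : Equiv.Perm (Fin n), w σ • σ.permMatrix ℝ) i j * (a i * b j)
        = ∑ σ : Equiv.Perm (Fin n), w σ * (a i * b (σ i)) := by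
      intro i
      have : ∀ j, (∑ σ : Equiv.Perm (Fin n), w σ • σ.permMatrix ℝ) i j * (a i * b j)
          = ∑ σ : Equiv.Perm (Fin n), w σ * (σ.permMatrix ℝ i j * (a i * b j)) := by
        intro j
        simp [Matrix.sum_apply, Finset.sum_mul, mul_assoc]
      simp only [this]
      rw [Finset.sum_comm]
      refine Finset.sum_congr rfl fun σ _ => ?_
      rw [← Finset.mul_sum]
      congr 1
      simp [Equiv.Perm.permMatrix, PEquiv.toMatrix_apply, Equiv.toPEquiv_apply,
        Finset.sum_ite_eq]
    simp only [e1]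
    rw [Finset.sum_comm]
    simp [Finset.mul_sum]
  rw [key]
  calc ∑ σ : Equiv.Perm (Fin n), w σ * ∑ i, a i * b (σ i)
      ≤ ∑ σ : Equiv.Perm (Fin n), w σ * ∑ i, a i * b i := by
        refine Finset.sum_le_sum fun σ _ => mul_le_mul_of_nonneg_left ?_ (hw0 σ)
        simpa [smul_eq_mul] using (monov ha hb).sum_smul_comp_perm_le_sum_smul (σ := σ)
    _ = ∑ i, a i * b i := by rw [← Finset.sum_mul, hw1, one_mul]

lemma trace_form {n : ℕ} (A B : Matrix (Fin n) (Fin n) ℂ)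
    (hA : A.IsHermitian) (hB : B.IsHermitian) :
    Complex.re (Matrix.trace (A * B)) =
      ∑ i, ∑ j, Complex.normSq
        (((star (hA.eigenvectorUnitary : Matrix (Fin n) (Fin n) ℂ)) *
          (hB.eigenvectorUnitary : Matrix (Fin n) (Fin n) ℂ)) i j)
        * (hA.eigenvalues i * hB.eigenvalues j) := by
  set U : Matrix (Fin n) (Fin n) ℂ := (hA.eigenvectorUnitary : Matrix (Fin n) (Fin n) ℂ) with hU
  set V : Matrix (Fin n) (Fin n) ℂ := (hB.eigenvectorUnitary : Matrix (Fin n) (Fin n) ℂ) with hV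
  set W : Matrix (Fin n) (Fin n) ℂ := star U * V with hW
  set Dμ : Matrix (Fin n) (Fin n) ℂ := diagonal (RCLike.ofReal ∘ hA.eigenvalues) with hDμ
  set Dν : Matrix (Fin n) (Fin n) ℂ := diagonal (RCLike.ofReal ∘ hB.eigenvalues) with hDν
  have htr : Matrix.trace (A * B) = Matrix.trace (Dμ * W * Dν * star W) := by
    conv_lhs => rw [hA.spectral_theorem, hB.spectral_theorem, Unitary.conjStarAlgAut_apply,
      Unitary.conjStarAlgAut_apply]
    rw [← hU, ← hV, ← hDμ, ← hDν]
    have e1 : U * Dμ * star U * (V * Dν * star V)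
        = U * (Dμ * star U * V * Dν * star V) := by
      simp only [Matrix.mul_assoc]
    rw [e1, Matrix.trace_mul_comm]
    congr 1
    rw [hW, Matrix.star_mul, star_star]
    simp only [Matrix.mul_assoc]
  rw [htr]
  have entry : ∀ i, (Dμ * W * Dν * star W) i i
      = ∑ j, (hA.eigenvalues i : ℂ) * W i j * (hB.eigenvalues j : ℂ) * (starRingEnd ℂ) (W i j) := by
    intro i
    rw [Matrix.mul_apply]
    simp only [hDμ, hDν, Matrix.mul_diagonal, Matrix.diagonal_mul, Matrix.star_apply,
      Function.comp_apply, Complex.star_def]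
    rfl
  have key : ∀ (x y : ℝ) (z : ℂ),
      ((x:ℂ) * z * (y:ℂ) * (starRingEnd ℂ) z).re = Complex.normSq z * (x * y) := by
    intro x y z
    have h : (x:ℂ) * z * (y:ℂ) * (starRingEnd ℂ) z = ((Complex.normSq z * (x * y) : ℝ) : ℂ) := by
      push_cast
      rw [← Complex.mul_conj]
      ring
    rw [h, Complex.ofReal_re]
  rw [Matrix.trace]
  simp only [Matrix.diag_apply, entry, Complex.re_sum, key]

section aux

lemma frob_eq_trace {n : ℕ} (C : Matrix (Fin n) (Fin n) ℂ) (hC : C.IsHermitian) :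
    ∑ i, ∑ j, ‖C i j‖ ^ 2 = Complex.re (Matrix.trace (C * C)) := by
  rw [Matrix.trace]
  simp only [Matrix.diag_apply, Matrix.mul_apply, Complex.re_sum]
  refine Finset.sum_congr rfl fun i _ => Finset.sum_congr rfl fun j _ => ?_
  rw [← hC.apply j i, Complex.star_def, Complex.mul_conj, Complex.ofReal_re, Complex.sq_norm]

lemma unitary_normSq_ds {n : ℕ} (W : Matrix (Fin n) (Fin n) ℂ)
    (h1 : W * star W = 1) (h2 : star W * W = 1) (pa pb : Equiv.Perm (Fin n)) :
    (Matrix.of fun i j => Complex.normSq (W (pa i) (pb j))) ∈ doublyStochastic ℝ (Fin n) := by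
  rw [mem_doublyStochastic_iff_sum]
  refine ⟨fun i j => Complex.normSq_nonneg _, fun i => ?_, fun j => ?_⟩
  · simp only [Matrix.of_apply]
    rw [Equiv.sum_comp pb (fun j => Complex.normSq (W (pa i) j))]
    have := congrArg (fun M : Matrix (Fin n) (Fin n) ℂ => Complex.re (M (pa i) (pa i))) h1
    simp only [Matrix.mul_apply, Matrix.star_apply, Matrix.one_apply_eq, Complex.one_re,
      Complex.re_sum, Complex.star_def, Complex.mul_conj, Complex.ofReal_re] at this
    exact this
  · simp only [Matrix.of_apply]
    rw [Equiv.sum_comp pa (fun i => Complex.normSq (W i (pb j)))]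
    have := congrArg (fun M : Matrix (Fin n) (Fin n) ℂ => Complex.re (M (pb j) (pb j))) h2
    simp only [Matrix.mul_apply, Matrix.star_apply, Matrix.one_apply_eq, Complex.one_re,
      Complex.re_sum, Complex.star_def] at this
    rw [← this]
    refine Finset.sum_congr rfl fun k _ => ?_
    rw [mul_comm, Complex.mul_conj, Complex.ofReal_re]

end aux

theorem stmt11 {n : ℕ} (A B : Matrix (Fin n) (Fin n) ℂ)
    (hA : A.IsHermitian) (hB : B.IsHermitian)
    (a b : Fin n → ℝ) (pa pb : Equiv.Perm (Fin n))
    (ha : a = hA.eigenvalues ∘ pa) (hb : b = hB.eigenvalues ∘ pb)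
    (haSorted : Antitone a) (hbSorted : Antitone b) :
    ∑ i, (a i - b i) ^ 2 ≤ ∑ i, ∑ j, ‖(A - B) i j‖ ^ 2 := by
  set U : Matrix (Fin n) (Fin n) ℂ := (hA.eigenvectorUnitary : Matrix (Fin n) (Fin n) ℂ) with hU
  set V : Matrix (Fin n) (Fin n) ℂ := (hB.eigenvectorUnitary : Matrix (Fin n) (Fin n) ℂ) with hV
  set W : Matrix (Fin n) (Fin n) ℂ := star U * V with hW
  set μ : Fin n → ℝ := hA.eigenvalues with hμ
  set ν : Fin n → ℝ := hB.eigenvalues with hν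
  have hU1 : U * star U = 1 := Matrix.mem_unitaryGroup_iff.mp hA.eigenvectorUnitary.2
  have hU2 : star U * U = 1 := Matrix.mem_unitaryGroup_iff'.mp hA.eigenvectorUnitary.2
  have hV1 : V * star V = 1 := Matrix.mem_unitaryGroup_iff.mp hB.eigenvectorUnitary.2
  have hV2 : star V * V = 1 := Matrix.mem_unitaryGroup_iff'.mp hB.eigenvectorUnitary.2
  have hW1 : W * star W = 1 := by
    rw [hW, Matrix.star_mul, star_star]
    calc star U * V * (star V * U) = star U * (V * star V) * U := by
          simp only [Matrix.mul_assoc]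
      _ = 1 := by rw [hV1, Matrix.mul_one, hU2]
  have hW2 : star W * W = 1 := by
    rw [hW, Matrix.star_mul, star_star]
    calc star V * U * (star U * V) = star V * (U * star U) * V := by
          simp only [Matrix.mul_assoc]
      _ = 1 := by rw [hU1, Matrix.mul_one, hV2]
  set d : Matrix (Fin n) (Fin n) ℝ :=
    Matrix.of fun i j => Complex.normSq (W (pa i) (pb j)) with hd
  have hds : d ∈ doublyStochastic ℝ (Fin n) := unitary_normSq_ds W hW1 hW2 pa pb
  -- trace computations
  have tAA : Complex.re (Matrix.trace (A * A)) = ∑ i, μ i ^ 2 := by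
    rw [trace_form A A hA hA, ← hU, ← hμ, hU2]
    simp [Matrix.one_apply, apply_ite, Finset.sum_ite_eq, sq]
  have tBB : Complex.re (Matrix.trace (B * B)) = ∑ i, ν i ^ 2 := by
    rw [trace_form B B hB hB, ← hV, ← hν, hV2]
    simp [Matrix.one_apply, apply_ite, Finset.sum_ite_eq, sq]
  have tAB : Complex.re (Matrix.trace (A * B))
      = ∑ i, ∑ j, Complex.normSq (W i j) * (μ i * ν j) := by
    rw [trace_form A B hA hB, ← hU, ← hV, ← hW, ← hμ, ← hν]
  -- expansion of the Frobenius norm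
  have hexp : (A - B) * (A - B) = A * A - A * B - B * A + B * B := by noncomm_ring
  have hBA : Matrix.trace (B * A) = Matrix.trace (A * B) := Matrix.trace_mul_comm B A
  have hRHS : ∑ i, ∑ j, ‖(A - B) i j‖ ^ 2
      = ∑ i, μ i ^ 2 + ∑ i, ν i ^ 2 - 2 * ∑ i, ∑ j, Complex.normSq (W i j) * (μ i * ν j) := by
    rw [frob_eq_trace (A - B) (hA.sub hB), hexp]
    rw [Matrix.trace_add, Matrix.trace_sub, Matrix.trace_sub, hBA]
    simp only [Complex.add_re, Complex.sub_re]
    rw [tAA, tBB, tAB]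
    ring
  -- reindexing
  have hre : ∑ i, ∑ j, Complex.normSq (W i j) * (μ i * ν j)
      = ∑ i, ∑ j, d i j * (a i * b j) := by
    rw [← Equiv.sum_comp pa (fun i => ∑ j, Complex.normSq (W i j) * (μ i * ν j))]
    refine Finset.sum_congr rfl fun i _ => ?_
    rw [← Equiv.sum_comp pb (fun j => Complex.normSq (W (pa i) j) * (μ (pa i) * ν j))]
    refine Finset.sum_congr rfl fun j _ => ?_
    simp [hd, ha, hb]
  have hsa : ∑ i, a i ^ 2 = ∑ i, μ i ^ 2 := by
    rw [ha]; exact Equiv.sum_comp pa (fun i => μ i ^ 2)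
  have hsb : ∑ i, b i ^ 2 = ∑ i, ν i ^ 2 := by
    rw [hb]; exact Equiv.sum_comp pb (fun i => ν i ^ 2)
  have hLHS : ∑ i, (a i - b i) ^ 2
      = ∑ i, a i ^ 2 + ∑ i, b i ^ 2 - 2 * ∑ i, a i * b i := by
    rw [← Finset.sum_add_distrib, Finset.mul_sum, ← Finset.sum_sub_distrib]
    exact Finset.sum_congr rfl fun i _ => by ring
  have hkey : ∑ i, ∑ j, d i j * (a i * b j) ≤ ∑ i, a i * b i :=
    ds_sum_le d hds a b haSorted hbSorted
  rw [hLHS, hRHS, hsa, hsb, hre]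
  linarith
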